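/- Let (X_t)_{t=0,...,τ} be a process of nonnegative random vectors in R^n with X_0 = x deterministically, satisfying: (1) E[X_{t+1} | X_t] = X_t; (2) X_t and X_{t+1} differ in at most two coordinates; (3) whenever two coordinates i,j change between time t and t+1, their sum is preserved: X_{i,t+1} + X_{j,t+1} = X_{i,t} + X_{j,t}. Then for every t and every subset S ⊆ [n], E[∏_{i∈S} X_{i,t}] ≤ ∏_{i∈S} x_i. -/

import Mathlib

open MeasureTheory Finset

private lemma core_ineq {n : ℕ} (a b : Fin n → ℝ)
    (hsum : ∀ i j, i ≠ j → b i ≠ a i → b j ≠ a j → b i + b j = a i + a j)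
    (T : Finset (Fin n)) (hT : ∀ k ∈ T, b k ≠ a k) (hcard : T.card ≤ 2) :
    ∏ i ∈ T, b i + ∑ k ∈ T, a k * ∏ j ∈ T.erase k, a j
      ≤ ∏ i ∈ T, a i + ∑ k ∈ T, b k * ∏ j ∈ T.erase k, a j := by
  interval_cases h : T.card
  · rw [Finset.card_eq_zero] at h
    subst h; simp
  · rw [Finset.card_eq_one] at h
    obtain ⟨k, rfl⟩ := h
    simp; linarith
  · rw [Finset.card_eq_two] at h
    obtain ⟨k, l, hkl, rfl⟩ := h
    have h1 : b k + b l = a k + a l :=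
      hsum k l hkl (hT k (by simp)) (hT l (by simp [hkl]))
    rw [Finset.prod_pair hkl, Finset.prod_pair hkl, Finset.sum_pair hkl,
      Finset.sum_pair hkl]
    rw [Finset.erase_insert (by simp [hkl]), show ({k, l} : Finset (Fin n)).erase l = {k} by
      rw [Finset.pair_comm, Finset.erase_insert (by simp [hkl.symm])]]
    simp only [Finset.prod_singleton]
    have h2 : b l = a k + a l - b k := by linarith
    rw [h2]
    nlinarith [sq_nonneg (b k - a k)]

private lemma pointwise_real {n : ℕ} (a b : Fin n → ℝ)
    (ha : ∀ k, 0 ≤ a k)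
    (htwo : ∃ i j : Fin n, ∀ k, k ≠ i → k ≠ j → b k = a k)
    (hsum : ∀ i j, i ≠ j → b i ≠ a i → b j ≠ a j → b i + b j = a i + a j)
    (S : Finset (Fin n)) :
    ∏ i ∈ S, b i + ∑ k ∈ S, a k * ∏ j ∈ S.erase k, a j
      ≤ ∏ i ∈ S, a i + ∑ k ∈ S, b k * ∏ j ∈ S.erase k, a j := by
  classical
  set T : Finset (Fin n) := S.filter (fun k => b k ≠ a k) with hTdef
  have hTS : T ⊆ S := Finset.filter_subset _ _
  have hTne : ∀ k ∈ T, b k ≠ a k := fun k hk => (Finset.mem_filter.mp hk).2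
  have hEq : ∀ k ∈ S, k ∉ T → b k = a k := by
    intro k hk hkT
    by_contra h
    exact hkT (Finset.mem_filter.mpr ⟨hk, h⟩)
  have hcard : T.card ≤ 2 := by
    obtain ⟨i, j, hij⟩ := htwo
    have : T ⊆ {i, j} := by
      intro k hk
      by_contra hk'
      simp only [Finset.mem_insert, Finset.mem_singleton, not_or] at hk'
      exact hTne k hk (hij k hk'.1 hk'.2)
    calc T.card ≤ ({i, j} : Finset (Fin n)).card := Finset.card_le_card this
      _ ≤ 2 := Finset.card_insert_le i {j} |>.trans (by simp)
  set Q : ℝ := ∏ j ∈ S \ T, a j with hQdef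
  have hQ0 : 0 ≤ Q := Finset.prod_nonneg fun j _ => ha j
  have hprodb : ∏ i ∈ S, b i = (∏ i ∈ T, b i) * Q := by
    rw [← Finset.prod_sdiff hTS, mul_comm]
    congr 1
    exact Finset.prod_congr rfl fun k hk =>
      hEq k (Finset.mem_sdiff.mp hk).1 (Finset.mem_sdiff.mp hk).2
  have hproda : ∏ i ∈ S, a i = (∏ i ∈ T, a i) * Q := by
    rw [← Finset.prod_sdiff hTS, mul_comm]
  have herase : ∀ k ∈ T, ∏ j ∈ S.erase k, a j = (∏ j ∈ T.erase k, a j) * Q := by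
    intro k hk
    have hsub : T.erase k ⊆ S.erase k := Finset.erase_subset_erase k hTS
    rw [← Finset.prod_sdiff hsub, mul_comm]
    congr 1
    congr 1
    ext m
    simp only [Finset.mem_sdiff, Finset.mem_erase]
    constructor
    · rintro ⟨⟨hmk, hmS⟩, hm⟩
      exact ⟨hmS, fun hmT => hm ⟨hmk, hmT⟩⟩
    · rintro ⟨hmS, hmT⟩
      have hmk : m ≠ k := fun h => hmT (h ▸ hk)
      exact ⟨⟨hmk, hmS⟩, fun h => hmT h.2⟩
  have hsplit : ∀ c : Fin n → ℝ,
      ∑ k ∈ S, c k * ∏ j ∈ S.erase k, a j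
        = (∑ k ∈ T, c k * ∏ j ∈ T.erase k, a j) * Q
          + ∑ k ∈ S \ T, c k * ∏ j ∈ S.erase k, a j := by
    intro c
    rw [← Finset.sum_sdiff hTS]
    rw [Finset.sum_mul]
    rw [add_comm]
    congr 1
    exact Finset.sum_congr rfl fun k hk => by rw [herase k hk, mul_assoc]
  rw [hprodb, hproda, hsplit a, hsplit b]
  have hsame : ∑ k ∈ S \ T, b k * ∏ j ∈ S.erase k, a j
      = ∑ k ∈ S \ T, a k * ∏ j ∈ S.erase k, a j :=
    Finset.sum_congr rfl fun k hk => by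
      rw [hEq k (Finset.mem_sdiff.mp hk).1 (Finset.mem_sdiff.mp hk).2]
  rw [hsame]
  have hcore := core_ineq a b hsum T hTne hcard
  nlinarith [mul_le_mul_of_nonneg_right hcore hQ0]

private lemma lintegral_mul_condexp {Ω : Type*} {m m0 : MeasurableSpace Ω} (hm : m ≤ m0)
    (μ : Measure Ω) [IsFiniteMeasure μ]
    {f h : Ω → ℝ} (hf : Integrable f μ) (hf0 : 0 ≤ᵐ[μ] f)
    (hcond : μ[f|m] =ᵐ[μ] h)
    {g : Ω → ENNReal} (hg : Measurable[m] g) :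
    ∫⁻ ω, ENNReal.ofReal (f ω) * g ω ∂μ = ∫⁻ ω, ENNReal.ofReal (h ω) * g ω ∂μ := by
  have hh_int : Integrable h μ := integrable_condExp.congr hcond
  have hh0 : 0 ≤ᵐ[μ] h := by
    filter_upwards [condExp_nonneg hf0, hcond] with ω h1 h2
    rw [← h2]; exact h1
  have hfm : AEMeasurable (fun ω => ENNReal.ofReal (f ω)) μ :=
    hf.aemeasurable.ennreal_ofReal
  have hhm : AEMeasurable (fun ω => ENNReal.ofReal (h ω)) μ :=
    hh_int.aemeasurable.ennreal_ofReal
  have key : ∀ s : Set Ω, MeasurableSet[m] s →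
      ∫⁻ ω in s, ENNReal.ofReal (f ω) ∂μ = ∫⁻ ω in s, ENNReal.ofReal (h ω) ∂μ := by
    intro s hs
    rw [← ofReal_integral_eq_lintegral_ofReal hf.restrict (ae_restrict_of_ae hf0),
      ← ofReal_integral_eq_lintegral_ofReal hh_int.restrict (ae_restrict_of_ae hh0)]
    congr 1
    rw [← setIntegral_condExp hm hf hs]
    exact (setIntegral_congr_ae (hm s hs) (hcond.mono fun ω hω _ => hω)).symm ▸ rfl
  refine @Measurable.ennreal_induction Ω m
    (fun g => ∫⁻ ω, ENNReal.ofReal (f ω) * g ω ∂μ = ∫⁻ ω, ENNReal.ofReal (h ω) * g ω ∂μ)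
    ?_ ?_ ?_ g hg
  · intro c s hs
    have e1 : ∀ (F : Ω → ℝ), (fun ω => ENNReal.ofReal (F ω) * (Set.indicator s (fun _ => c) ω))
        = fun ω => s.indicator (fun ω => c * ENNReal.ofReal (F ω)) ω := by
      intro F; ext ω
      by_cases hω : ω ∈ s <;> simp [hω, Set.indicator_apply, mul_comm]
    simp only [e1 f, e1 h]
    rw [lintegral_indicator (hm s hs) _, lintegral_indicator (hm s hs) _,
      lintegral_const_mul'' _ hfm.restrict, lintegral_const_mul'' _ hhm.restrict, key s hs]
  · intro g1 g2 _ hg1 hg2 h1 h2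
    have m1 : Measurable g1 := hg1.mono hm le_rfl
    have m2 : Measurable g2 := hg2.mono hm le_rfl
    have e2 : ∀ (F : Ω → ℝ), (fun ω => ENNReal.ofReal (F ω) * (g1 + g2) ω)
        = fun ω => ENNReal.ofReal (F ω) * g1 ω + ENNReal.ofReal (F ω) * g2 ω := by
      intro F; ext ω; simp [mul_add]
    rw [e2 f, e2 h, lintegral_add_left' (f := fun ω => ENNReal.ofReal (f ω) * g1 ω) (hfm.mul m1.aemeasurable) _,
      lintegral_add_left' (f := fun ω => ENNReal.ofReal (h ω) * g1 ω) (hhm.mul m1.aemeasurable) _, h1, h2]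
  · intro gs hgs hmono hP
    have mgs : ∀ k, Measurable (gs k) := fun k => (hgs k).mono hm le_rfl
    have e3 : ∀ (F : Ω → ℝ), (fun ω => ENNReal.ofReal (F ω) * ⨆ k, gs k ω)
        = fun ω => ⨆ k, ENNReal.ofReal (F ω) * gs k ω := by
      intro F; ext ω; rw [ENNReal.mul_iSup]
    rw [e3 f, e3 h,
      lintegral_iSup' (f := fun k ω => ENNReal.ofReal (f ω) * gs k ω) (fun k => hfm.mul (mgs k).aemeasurable)
        (Filter.Eventually.of_forall fun ω k l hkl =>
          mul_le_mul_right (hmono hkl ω) _),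
      lintegral_iSup' (f := fun k ω => ENNReal.ofReal (h ω) * gs k ω) (fun k => hhm.mul (mgs k).aemeasurable)
        (Filter.Eventually.of_forall fun ω k l hkl =>
          mul_le_mul_right (hmono hkl ω) _)]
    exact iSup_congr hP

theorem stmt_3 {Ω : Type*} [m0 : MeasurableSpace Ω] (μ : Measure Ω) [IsProbabilityMeasure μ]
    {n : ℕ} (τ : ℕ) (X : ℕ → Ω → Fin n → ℝ) (x : Fin n → ℝ)
    (ℱ : Filtration ℕ m0)
    (hadapt : ∀ t i, Measurable[ℱ t] fun ω => X t ω i)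
    (hX0 : ∀ ω i, X 0 ω i = x i)
    (hnonneg : ∀ t ω i, 0 ≤ X t ω i)
    (hint : ∀ t (S : Finset (Fin n)), Integrable (fun ω => ∏ i ∈ S, X t ω i) μ)
    (hmart : ∀ t i, μ[(fun ω => X (t + 1) ω i) | ℱ t] =ᵐ[μ] fun ω => X t ω i)
    (htwo : ∀ t ω, ∃ i j : Fin n, ∀ k, k ≠ i → k ≠ j → X (t + 1) ω k = X t ω k)
    (hsum : ∀ t ω i j, i ≠ j → X (t + 1) ω i ≠ X t ω i → X (t + 1) ω j ≠ X t ω j →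
      X (t + 1) ω i + X (t + 1) ω j = X t ω i + X t ω j) :
    ∀ t ≤ τ, ∀ S : Finset (Fin n),
      ∫ ω, ∏ i ∈ S, X t ω i ∂μ ≤ ∏ i ∈ S, x i := by
  classical
  have Xm : ∀ t i, Measurable fun ω => X t ω i := fun t i => (hadapt t i).mono (ℱ.le t) le_rfl
  set I : ℕ → Finset (Fin n) → ENNReal :=
    fun t S => ∫⁻ ω, ∏ i ∈ S, ENNReal.ofReal (X t ω i) ∂μ with hIdef
  have hIeq : ∀ t S, I t S = ∫⁻ ω, ENNReal.ofReal (∏ i ∈ S, X t ω i) ∂μ := by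
    intro t S
    refine lintegral_congr fun ω => ?_
    rw [ENNReal.ofReal_prod_of_nonneg (fun i _ => hnonneg t ω i)]
  have hIfin : ∀ t S, I t S ≠ ⊤ := by
    intro t S
    rw [hIeq, ← ofReal_integral_eq_lintegral_ofReal (hint t S)
      (Filter.Eventually.of_forall fun ω => Finset.prod_nonneg fun i _ => hnonneg t ω i)]
    exact ENNReal.ofReal_ne_top
  -- the key one-step inequality
  have hstep : ∀ t S, I (t + 1) S ≤ I t S := by
    intro t S
    -- measurable building blocks
    have mprod : ∀ u, Measurable fun ω => ∏ i ∈ S, ENNReal.ofReal (X u ω i) :=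
      fun u => Finset.measurable_prod _ fun i _ => (Xm u i).ennreal_ofReal
    have mterm : ∀ (u v : ℕ) (k : Fin n),
        Measurable fun ω => ENNReal.ofReal (X u ω k)
          * ∏ j ∈ S.erase k, ENNReal.ofReal (X v ω j) :=
      fun u v k => (Xm u k).ennreal_ofReal.mul
        (Finset.measurable_prod _ fun j _ => (Xm v j).ennreal_ofReal)
    -- pointwise inequality in ENNReal
    have hside : ∀ (ω : Ω) (c d : Fin n → ℝ), (∀ k, 0 ≤ c k) → (∀ k, 0 ≤ d k) →
        ENNReal.ofReal (∏ i ∈ S, c i + ∑ k ∈ S, d k * ∏ j ∈ S.erase k, X t ω j)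
          = ∏ i ∈ S, ENNReal.ofReal (c i)
            + ∑ k ∈ S, ENNReal.ofReal (d k) * ∏ j ∈ S.erase k, ENNReal.ofReal (X t ω j) := by
      intro ω c d hc hd
      rw [ENNReal.ofReal_add (Finset.prod_nonneg fun i _ => hc i)
          (Finset.sum_nonneg fun k _ => mul_nonneg (hd k)
            (Finset.prod_nonneg fun j _ => hnonneg t ω j)),
        ENNReal.ofReal_prod_of_nonneg (fun i _ => hc i),
        ENNReal.ofReal_sum_of_nonneg (fun k _ => mul_nonneg (hd k)
          (Finset.prod_nonneg fun j _ => hnonneg t ω j))]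
      congr 1
      refine Finset.sum_congr rfl fun k _ => ?_
      rw [ENNReal.ofReal_mul (hd k),
        ENNReal.ofReal_prod_of_nonneg (fun j _ => hnonneg t ω j)]
    have hpt : ∀ ω : Ω,
        (∏ i ∈ S, ENNReal.ofReal (X (t + 1) ω i))
          + ∑ k ∈ S, ENNReal.ofReal (X t ω k) * ∏ j ∈ S.erase k, ENNReal.ofReal (X t ω j)
        ≤ (∏ i ∈ S, ENNReal.ofReal (X t ω i))
          + ∑ k ∈ S, ENNReal.ofReal (X (t + 1) ω k)
              * ∏ j ∈ S.erase k, ENNReal.ofReal (X t ω j) := by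
      intro ω
      rw [← hside ω (X (t + 1) ω) (X t ω) (hnonneg (t + 1) ω) (hnonneg t ω),
        ← hside ω (X t ω) (X (t + 1) ω) (hnonneg t ω) (hnonneg (t + 1) ω)]
      exact ENNReal.ofReal_le_ofReal
        (pointwise_real (X t ω) (X (t + 1) ω) (hnonneg t ω) (htwo t ω) (hsum t ω) S)
    -- integrate the pointwise inequality
    have hint_lhs := lintegral_mono (μ := μ) hpt
    rw [lintegral_add_left (mprod (t + 1)), lintegral_add_left (mprod t),
      lintegral_finset_sum _ (fun k _ => mterm t t k),
      lintegral_finset_sum _ (fun k _ => mterm (t + 1) t k)] at hint_lhs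
    -- identify the sums
    have hL : ∀ k ∈ S,
        ∫⁻ ω, ENNReal.ofReal (X t ω k) * ∏ j ∈ S.erase k, ENNReal.ofReal (X t ω j) ∂μ
          = I t S := by
      intro k hk
      refine lintegral_congr fun ω => ?_
      exact Finset.mul_prod_erase S (fun j => ENNReal.ofReal (X t ω j)) hk
    have hR : ∀ k ∈ S,
        ∫⁻ ω, ENNReal.ofReal (X (t + 1) ω k) * ∏ j ∈ S.erase k, ENNReal.ofReal (X t ω j) ∂μ
          = I t S := by
      intro k hk
      have hintk : Integrable (fun ω => X (t + 1) ω k) μ := by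
        have := hint (t + 1) ({k} : Finset (Fin n))
        simpa using this
      have hpull := lintegral_mul_condexp (ℱ.le t) μ hintk
        (Filter.Eventually.of_forall fun ω => hnonneg (t + 1) ω k) (hmart t k)
        (g := fun ω => ∏ j ∈ S.erase k, ENNReal.ofReal (X t ω j))
        (Finset.measurable_prod _ fun j _ => (hadapt t j).ennreal_ofReal)
      rw [hpull]
      exact hL k hk
    rw [Finset.sum_congr rfl hL, Finset.sum_congr rfl hR] at hint_lhs
    have hfin : (∑ _k ∈ S, I t S) ≠ ⊤ := by
      refine (ENNReal.sum_lt_top.mpr fun k _ => ?_).ne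
      exact lt_of_le_of_ne le_top (hIfin t S)
    exact (ENNReal.add_le_add_iff_right hfin).mp hint_lhs
  have hIle : ∀ t S, I t S ≤ I 0 S := by
    intro t S
    induction t with
    | zero => exact le_rfl
    | succ t ih => exact (hstep t S).trans ih
  have hΩ : Nonempty Ω := by
    by_contra h
    rw [not_nonempty_iff] at h
    have h1 : μ Set.univ = 1 := measure_univ
    rw [Set.univ_eq_empty_iff.mpr h, measure_empty] at h1
    exact zero_ne_one h1
  obtain ⟨ω0⟩ := hΩ
  have hx : ∀ i, 0 ≤ x i := fun i => hX0 ω0 i ▸ hnonneg 0 ω0 i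
  have hI0 : ∀ S : Finset (Fin n), I 0 S = ENNReal.ofReal (∏ i ∈ S, x i) := by
    intro S
    have h2 : I 0 S = ∫⁻ _ω, ENNReal.ofReal (∏ i ∈ S, x i) ∂μ := by
      rw [hIeq]
      exact lintegral_congr fun ω => by
        rw [Finset.prod_congr rfl fun i (_ : i ∈ S) => hX0 ω i]
    rw [h2, lintegral_const, measure_univ, mul_one]
  intro t _ S
  have h1 : ∫ ω, ∏ i ∈ S, X t ω i ∂μ = (I t S).toReal := by
    rw [integral_eq_lintegral_of_nonneg_ae
      (Filter.Eventually.of_forall fun ω => Finset.prod_nonneg fun i _ => hnonneg t ω i)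
      (hint t S).aestronglyMeasurable, hIeq]
  rw [h1]
  calc (I t S).toReal ≤ (I 0 S).toReal := by
        refine ENNReal.toReal_mono ?_ (hIle t S)
        rw [hI0]; exact ENNReal.ofReal_ne_top
    _ = ∏ i ∈ S, x i := by
        rw [hI0, ENNReal.toReal_ofReal (Finset.prod_nonneg fun i _ => hx i)]
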